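/- Fix real numbers b, h, b', h' with 0 < b' < b and 0 < h' < h. Define, for λ large enough so that λ² h'² − λ^{2/3}(b² − b'²) > 0, A_λ = (λ² h'² + λ^{2/3} b'²)·( arctan( λ^{1/3} b / √(λ² h'² − λ^{2/3}(b² − b'²)) ) − λ^{1/3} b · √(λ² h'² − λ^{2/3}(b² − b'²)) / (λ² h'² + λ^{2/3} b'²) ) − (λ² h² + λ^{2/3} b²)·( arctan( λ^{-2/3} b / h ) − λ^{-2/3} (b/h) · (1 + λ^{-4/3} b²/h²)^{-1} ). Then A_λ converges, as λ → ∞, to (2/3)·b³·(1/h' − 1/h). -/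

import Mathlib

open Real Filter

theorem arctan_div_self_tendsto :
    Tendsto (fun x : ℝ => Real.arctan x / x) (nhdsWithin 0 {0}ᶜ) (nhds 1) := by
  have h := (Real.hasDerivAt_arctan 0)
  rw [hasDerivAt_iff_tendsto_slope] at h
  norm_num at h
  convert h using 2 with x
  rw [slope_def_field]
  simp [div_eq_inv_mul]

/-- The normalized "cap" function `((1+y²) arctan y − y)/y³`. -/
noncomputable def Gfun (y : ℝ) : ℝ := ((1 + y ^ 2) * Real.arctan y - y) / y ^ 3

theorem Gfun_tendsto :
    Tendsto Gfun (nhdsWithin 0 {0}ᶜ) (nhds (2 / 3)) := by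
  apply HasDerivAt.lhopital_zero_nhdsNE (f' := fun x => 2 * x * Real.arctan x)
    (g' := fun x => 3 * x ^ 2)
  · filter_upwards with x
    have h1 : HasDerivAt (fun x : ℝ => (1 + x ^ 2) * Real.arctan x)
        (2 * x * Real.arctan x + (1 + x ^ 2) * (1 / (1 + x ^ 2))) x := by
      have := ((hasDerivAt_pow 2 x).const_add 1).mul (Real.hasDerivAt_arctan x)
      refine this.congr_deriv ?_
      norm_num
    have h2 := h1.sub (hasDerivAt_id x)
    refine h2.congr_deriv ?_
    have : (1 + x ^ 2) ≠ 0 := by positivity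
    rw [mul_one_div_cancel this]; ring
  · filter_upwards with x
    have h3 := hasDerivAt_pow 3 x
    norm_num at h3
    exact h3
  · filter_upwards [self_mem_nhdsWithin] with x hx
    have : x ≠ 0 := hx
    positivity
  · have : Tendsto (fun x : ℝ => (1 + x ^ 2) * Real.arctan x - x) (nhds 0) (nhds 0) := by
      have : Continuous (fun x : ℝ => (1 + x ^ 2) * Real.arctan x - x) := by continuity
      simpa using this.tendsto 0
    exact this.mono_left nhdsWithin_le_nhds
  · have : Tendsto (fun x : ℝ => x ^ 3) (nhds (0:ℝ)) (nhds 0) := by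
      simpa using (continuous_pow 3).tendsto (0:ℝ)
    exact this.mono_left nhdsWithin_le_nhds
  · have h := arctan_div_self_tendsto
    have : Tendsto (fun x : ℝ => 2 / 3 * (Real.arctan x / x)) (nhdsWithin 0 {0}ᶜ)
        (nhds (2 / 3 * 1)) := h.const_mul _
    norm_num at this
    apply this.congr'
    filter_upwards [self_mem_nhdsWithin] with x hx
    have hx : x ≠ 0 := hx
    field_simp

/-- The area `A_λ = |Δ_n^{(λ)}|₂` of the difference of two circular caps. -/
noncomputable def Alam (lam b h b' h' : ℝ) : ℝ :=
  (lam ^ 2 * h' ^ 2 + lam ^ ((2 : ℝ) / 3) * b' ^ 2) *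
      (Real.arctan (lam ^ ((1 : ℝ) / 3) * b /
          Real.sqrt (lam ^ 2 * h' ^ 2 - lam ^ ((2 : ℝ) / 3) * (b ^ 2 - b' ^ 2))) -
        lam ^ ((1 : ℝ) / 3) * b *
          Real.sqrt (lam ^ 2 * h' ^ 2 - lam ^ ((2 : ℝ) / 3) * (b ^ 2 - b' ^ 2)) /
          (lam ^ 2 * h' ^ 2 + lam ^ ((2 : ℝ) / 3) * b' ^ 2)) -
    (lam ^ 2 * h ^ 2 + lam ^ ((2 : ℝ) / 3) * b ^ 2) *
      (Real.arctan (lam ^ (-(2 : ℝ) / 3) * b / h) -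
        lam ^ (-(2 : ℝ) / 3) * (b / h) * (1 + lam ^ (-(4 : ℝ) / 3) * b ^ 2 / h ^ 2)⁻¹)

theorem Alam_eq (b h b' h' lam : ℝ) (hb' : 0 < b') (hb'b : b' < b) (hh' : 0 < h')
    (hh : 0 < h) (h1 : 1 ≤ lam) (h2 : lam ^ (-(4:ℝ)/3) * (b^2 - b'^2) < h'^2) :
    Alam lam b h b' h' =
      (b ^ 3 / Real.sqrt (h' ^ 2 - lam ^ (-(4:ℝ)/3) * (b ^ 2 - b' ^ 2))) *
          Gfun (lam ^ (-(2:ℝ)/3) * b /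
            Real.sqrt (h' ^ 2 - lam ^ (-(4:ℝ)/3) * (b ^ 2 - b' ^ 2))) -
        (b ^ 3 / h) * Gfun (lam ^ (-(2:ℝ)/3) * b / h) := by
  have hlam : (0:ℝ) < lam := lt_of_lt_of_le one_pos h1
  have hb : 0 < b := hb'.trans hb'b
  set q := lam ^ ((1:ℝ)/3) with hqdef
  have hq : 0 < q := Real.rpow_pos_of_pos hlam _
  have key : ∀ n : ℕ, q ^ n = lam ^ ((n : ℝ)/3) := by
    intro n
    rw [hqdef, ← Real.rpow_natCast (lam ^ ((1:ℝ)/3)) n, ← Real.rpow_mul hlam.le]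
    congr 1
    ring
  have e1 : lam ^ ((2:ℝ)/3) = q ^ 2 := by rw [key 2]; norm_num
  have e2 : lam ^ 2 = q ^ 6 := by
    rw [key 6, show ((6:ℕ):ℝ)/3 = ((2:ℕ):ℝ) by norm_num, Real.rpow_natCast]
  have e3 : lam ^ (-(2:ℝ)/3) = (q ^ 2)⁻¹ := by
    rw [key 2, ← Real.rpow_neg hlam.le]
    congr 1
    norm_num
  have e4 : lam ^ (-(4:ℝ)/3) = (q ^ 4)⁻¹ := by
    rw [key 4, ← Real.rpow_neg hlam.le]
    congr 1
    norm_num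
  rw [e4] at h2
  set W := Real.sqrt (h' ^ 2 - (q ^ 4)⁻¹ * (b ^ 2 - b' ^ 2)) with hWdef
  have hWpos : 0 < W := Real.sqrt_pos.2 (by linarith)
  have hW2 : W ^ 2 = h' ^ 2 - (q ^ 4)⁻¹ * (b ^ 2 - b' ^ 2) :=
    Real.sq_sqrt (by linarith)
  have hsub : h' ^ 2 = W ^ 2 + (q ^ 4)⁻¹ * (b ^ 2 - b' ^ 2) := by linarith
  have hsqrtD : Real.sqrt (lam ^ 2 * h' ^ 2 - lam ^ ((2:ℝ)/3) * (b ^ 2 - b' ^ 2))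
      = q ^ 3 * W := by
    rw [show lam ^ 2 * h' ^ 2 - lam ^ ((2:ℝ)/3) * (b ^ 2 - b' ^ 2) = (q ^ 3 * W) ^ 2 by
      rw [e1, e2, hsub]; field_simp; ring]
    exact Real.sqrt_sq (by positivity)
  have harg : q * b / (q ^ 3 * W) = (q ^ 2)⁻¹ * b / W := by
    field_simp
  unfold Alam Gfun
  rw [hsqrtD, e1, e2, e3, e4, harg]
  set A := Real.arctan ((q ^ 2)⁻¹ * b / W)
  set B := Real.arctan ((q ^ 2)⁻¹ * b / h)
  have hWne : W ≠ 0 := hWpos.ne'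
  have hqne : q ≠ 0 := hq.ne'
  have hhne : h ≠ 0 := hh.ne'
  have hbne : b ≠ 0 := hb.ne'
  have hden1 : q ^ 6 * h' ^ 2 + q ^ 2 * b' ^ 2 ≠ 0 := by positivity
  have hden2 : (1 + (q ^ 4)⁻¹ * b ^ 2 / h ^ 2) ≠ 0 := by positivity
  simp only [← hWdef, ← hqdef]
  rw [hsub]
  have hden3 : q ^ 6 * b ^ 2 + q ^ 10 * W ^ 2 ≠ 0 := by positivity
  have hD : (q ^ 6 * b ^ 2 + q ^ 10 * W ^ 2) * (q ^ 6 * b ^ 2 + q ^ 10 * W ^ 2)⁻¹ = 1 :=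
    mul_inv_cancel₀ hden3
  clear_value A B W
  field_simp
  have hden4 : q ^ 4 * W ^ 2 + b ^ 2 ≠ 0 := by positivity
  rw [show q ^ 4 * W ^ 2 + (b ^ 2 - b' ^ 2) + b' ^ 2 = q ^ 4 * W ^ 2 + b ^ 2 by ring, mul_sub,
    mul_div_assoc', mul_div_right_comm, div_self hden4, one_mul]
  ring

/-- `A_λ → (2/3) b³ (1/h' − 1/h)` as `λ → ∞`. -/
theorem Alam_tendsto (b h b' h' : ℝ) (hb' : 0 < b') (hb'b : b' < b) (hh' : 0 < h') (hh'h : h' < h) :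
    Tendsto (fun lam : ℝ => Alam lam b h b' h') atTop
      (nhds (2 / 3 * b ^ 3 * (1 / h' - 1 / h))) := by
  have hb : 0 < b := hb'.trans hb'b
  have hh : 0 < h := hh'.trans hh'h
  have h23 : Tendsto (fun l : ℝ => l ^ (-(2:ℝ)/3)) atTop (nhds 0) := by
    have := tendsto_rpow_neg_atTop (show (0:ℝ) < 2/3 by norm_num)
    simpa [neg_div] using this
  have h43 : Tendsto (fun l : ℝ => l ^ (-(4:ℝ)/3)) atTop (nhds 0) := by
    have := tendsto_rpow_neg_atTop (show (0:ℝ) < 4/3 by norm_num)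
    simpa [neg_div] using this
  have hu : Tendsto (fun l : ℝ => l ^ (-(4:ℝ)/3) * (b ^ 2 - b' ^ 2)) atTop (nhds 0) := by
    simpa using h43.mul_const (b ^ 2 - b' ^ 2)
  have hW : Tendsto (fun l : ℝ => Real.sqrt (h' ^ 2 - l ^ (-(4:ℝ)/3) * (b ^ 2 - b' ^ 2)))
      atTop (nhds h') := by
    have h0 : Tendsto (fun l : ℝ => h' ^ 2 - l ^ (-(4:ℝ)/3) * (b ^ 2 - b' ^ 2)) atTop
        (nhds (h' ^ 2)) := by
      simpa using tendsto_const_nhds.sub hu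
    have := (Real.continuous_sqrt.tendsto (h' ^ 2)).comp h0
    rwa [Real.sqrt_sq hh'.le] at this
  have hev : ∀ᶠ l : ℝ in atTop, l ^ (-(4:ℝ)/3) * (b ^ 2 - b' ^ 2) < h' ^ 2 :=
    hu.eventually_lt_const (by positivity)
  have hWevpos : ∀ᶠ l : ℝ in atTop,
      0 < Real.sqrt (h' ^ 2 - l ^ (-(4:ℝ)/3) * (b ^ 2 - b' ^ 2)) := by
    filter_upwards [hev] with l hl
    exact Real.sqrt_pos.2 (by linarith)
  -- s tends to 0 within {0}ᶜ
  have hs0 : Tendsto (fun l : ℝ => l ^ (-(2:ℝ)/3) * b /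
      Real.sqrt (h' ^ 2 - l ^ (-(4:ℝ)/3) * (b ^ 2 - b' ^ 2))) atTop (nhds 0) := by
    have hnum : Tendsto (fun l : ℝ => l ^ (-(2:ℝ)/3) * b) atTop (nhds 0) := by
      simpa using h23.mul_const b
    have := hnum.div hW hh'.ne'
    rw [zero_div] at this
    exact this
  have hspos : ∀ᶠ l : ℝ in atTop, (0:ℝ) < l ^ (-(2:ℝ)/3) * b /
      Real.sqrt (h' ^ 2 - l ^ (-(4:ℝ)/3) * (b ^ 2 - b' ^ 2)) := by
    filter_upwards [hWevpos, eventually_gt_atTop (0:ℝ)] with l hl hl0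
    have : (0:ℝ) < l ^ (-(2:ℝ)/3) := Real.rpow_pos_of_pos hl0 _
    positivity
  have hs : Tendsto (fun l : ℝ => l ^ (-(2:ℝ)/3) * b /
      Real.sqrt (h' ^ 2 - l ^ (-(4:ℝ)/3) * (b ^ 2 - b' ^ 2))) atTop (nhdsWithin 0 {0}ᶜ) := by
    rw [tendsto_nhdsWithin_iff]
    refine ⟨hs0, ?_⟩
    filter_upwards [hspos] with l hl
    exact ne_of_gt hl
  have hx0 : Tendsto (fun l : ℝ => l ^ (-(2:ℝ)/3) * b / h) atTop (nhds 0) := by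
    have hnum : Tendsto (fun l : ℝ => l ^ (-(2:ℝ)/3) * b) atTop (nhds 0) := by
      simpa using h23.mul_const b
    simpa using hnum.div_const h
  have hx : Tendsto (fun l : ℝ => l ^ (-(2:ℝ)/3) * b / h) atTop (nhdsWithin 0 {0}ᶜ) := by
    rw [tendsto_nhdsWithin_iff]
    refine ⟨hx0, ?_⟩
    filter_upwards [eventually_gt_atTop (0:ℝ)] with l hl0
    have : (0:ℝ) < l ^ (-(2:ℝ)/3) := Real.rpow_pos_of_pos hl0 _
    have : (0:ℝ) < l ^ (-(2:ℝ)/3) * b / h := by positivity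
    exact ne_of_gt this
  have hGs := Gfun_tendsto.comp hs
  have hGx := Gfun_tendsto.comp hx
  have hmain : Tendsto (fun l : ℝ =>
      (b ^ 3 / Real.sqrt (h' ^ 2 - l ^ (-(4:ℝ)/3) * (b ^ 2 - b' ^ 2))) *
          Gfun (l ^ (-(2:ℝ)/3) * b /
            Real.sqrt (h' ^ 2 - l ^ (-(4:ℝ)/3) * (b ^ 2 - b' ^ 2))) -
        (b ^ 3 / h) * Gfun (l ^ (-(2:ℝ)/3) * b / h)) atTop
      (nhds ((b ^ 3 / h') * (2/3) - (b ^ 3 / h) * (2/3))) := by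
    have hcoef : Tendsto (fun l : ℝ =>
        b ^ 3 / Real.sqrt (h' ^ 2 - l ^ (-(4:ℝ)/3) * (b ^ 2 - b' ^ 2))) atTop
        (nhds (b ^ 3 / h')) := tendsto_const_nhds.div hW hh'.ne'
    have t1 := hcoef.mul hGs
    have t2 := hGx.const_mul (b ^ 3 / h)
    simp only [Function.comp] at t1 t2
    exact t1.sub t2
  have hval : (2 / 3 * b ^ 3 * (1 / h' - 1 / h)) =
      (b ^ 3 / h') * (2/3) - (b ^ 3 / h) * (2/3) := by
    field_simp
  rw [hval]
  apply hmain.congr'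
  filter_upwards [eventually_ge_atTop (1:ℝ), hev] with l h1 h2
  exact (Alam_eq b h b' h' l hb' hb'b hh' hh h1 h2).symm
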